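/- Let T ≥ 0, let X, Z be finite nonempty types and Y a finite additive abelian group, and let ε ∈ [0,1]. Let R : X → Y be drawn uniformly at random and, independently, let B ⊆ X be an ε-random subset. Define the blinded function B R : X → Y × ZMod 2 by (B R) x = (0, 1) if x ∈ B and (B R) x = (R x, 0) otherwise. Fix a quantum query algorithm with T queries: a unit vector ψ₀ in H = EuclideanSpace ℂ (X × (Y × ZMod 2) × Z) and unitaries C₀, …, C_T on H; the final state is ψ := C_T · O_{B R} · ⋯ · O_{B R} · C₀ · ψ₀, where O_{B R} is the oracle unitary for B R. Let out : X × (Y × ZMod 2) × Z → X × Y be any readout function. Then the probability that a computational-basis measurement of ψ yields an outcome w with out w = (m, t) satisfying m ∈ B and R m = t is at most 1/|Y|; that is, E_{R, B} [ Σ over basis labels w with out w = (m,t), m ∈ B, R m = t of |⟨e_w, ψ⟩|² ] ≤ 1/|Y|. -/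

import Mathlib

open scoped InnerProductSpace

noncomputable section

/-- The oracle unitary for a function `Q : X → Y'`: the permutation unitary induced on
standard basis vectors by `(x, y, z) ↦ (x, y + Q x, z)`. -/
def oracleOp {X Y' Z : Type*} [Fintype X] [Fintype Y'] [Fintype Z] [AddCommGroup Y']
    (Q : X → Y') :
    EuclideanSpace ℂ (X × Y' × Z) →L[ℂ] EuclideanSpace ℂ (X × Y' × Z) :=
  LinearMap.toContinuousLinearMap
    { toFun := fun ψ => (WithLp.toLp 2 (fun p : X × Y' × Z => ψ (p.1, p.2.1 - Q p.1, p.2.2)) : EuclideanSpace ℂ (X × Y' × Z))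
      map_add' := fun _ _ => rfl
      map_smul' := fun _ _ => rfl }

/-- `runQ T C O ψ₀ = C T • O • C (T-1) • ⋯ • O • C 0 • ψ₀`. -/
def runQ {H : Type*} [NormedAddCommGroup H] [NormedSpace ℂ H] :
    (T : ℕ) → (Fin (T + 1) → (H →L[ℂ] H)) → (H →L[ℂ] H) → H → H
  | 0, C, _, ψ => C 0 ψ
  | T + 1, C, O, ψ => C (Fin.last (T + 1)) (O (runQ T (fun i => C i.castSucc) O ψ))

/-- The oracle operator preserves the norm. -/
private lemma oracleOp_norm {X Y' Z : Type*} [Fintype X] [Fintype Y'] [Fintype Z]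
    [AddCommGroup Y'] (Q : X → Y') (ψ : EuclideanSpace ℂ (X × Y' × Z)) :
    ‖oracleOp Q ψ‖ = ‖ψ‖ := by
  have hfun : ∀ p : X × Y' × Z, (oracleOp Q ψ) p = ψ (p.1, p.2.1 - Q p.1, p.2.2) :=
    fun p => rfl
  rw [EuclideanSpace.norm_eq, EuclideanSpace.norm_eq]
  congr 1
  let e : (X × Y' × Z) ≃ (X × Y' × Z) :=
    { toFun := fun p => (p.1, p.2.1 - Q p.1, p.2.2)
      invFun := fun p => (p.1, p.2.1 + Q p.1, p.2.2)
      left_inv := fun p => by simp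
      right_inv := fun p => by simp }
  calc ∑ p, ‖(oracleOp Q ψ) p‖ ^ 2 = ∑ p, ‖ψ (e p)‖ ^ 2 := by
        refine Finset.sum_congr rfl fun p _ => ?_
        rw [hfun p]; rfl
    _ = ∑ p, ‖ψ p‖ ^ 2 := Equiv.sum_comp e fun p => ‖ψ p‖ ^ 2

/-- `runQ` preserves the norm when all the `C i` are unitary and `O` is norm preserving. -/
private lemma runQ_norm {H : Type*} [NormedAddCommGroup H] [InnerProductSpace ℂ H]
    [CompleteSpace H] :
    ∀ (T : ℕ) (C : Fin (T + 1) → (H →L[ℂ] H)),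
      (∀ i, C i ∈ unitary (H →L[ℂ] H)) →
      ∀ (O : H →L[ℂ] H), (∀ ψ, ‖O ψ‖ = ‖ψ‖) →
      ∀ ψ₀ : H, ‖runQ T C O ψ₀‖ = ‖ψ₀‖
  | 0, C, hC, O, hO, ψ₀ => by
    simp only [runQ]
    exact ContinuousLinearMap.norm_map_of_mem_unitary (hC 0) ψ₀
  | T + 1, C, hC, O, hO, ψ₀ => by
    simp only [runQ]
    rw [ContinuousLinearMap.norm_map_of_mem_unitary (hC _), hO,
      runQ_norm T (fun i => C i.castSucc) (fun i => hC _) O hO ψ₀]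

/-- Averaging out the value of `R` at one point: summing an `R m = t`-slice of a
quantity invariant under shifting `R` at `m` gives `1/|Y|` of the full sum. -/
private lemma slice_bound {X Y : Type*} [Fintype X] [DecidableEq X] [Fintype Y]
    [DecidableEq Y] [AddCommGroup Y]
    (g : (X → Y) → ℝ) (m : X) (t : Y)
    (hinv : ∀ (R : X → Y) (s : Y), g (fun x => if x = m then R x + s else R x) = g R) :
    (Fintype.card Y : ℝ) * ∑ R : X → Y, (if R m = t then g R else 0)
      = ∑ R : X → Y, g R := by
  have hs : ∀ s : Y, (∑ R : X → Y, if R m = s then g R else 0)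
      = ∑ R : X → Y, if R m = t then g R else 0 := by
    intro s
    let e : (X → Y) ≃ (X → Y) :=
      { toFun := fun R => fun x => if x = m then R x + (s - t) else R x
        invFun := fun R => fun x => if x = m then R x - (s - t) else R x
        left_inv := fun R => by funext x; by_cases h : x = m <;> simp [h]
        right_inv := fun R => by funext x; by_cases h : x = m <;> simp [h] }
    refine (Fintype.sum_equiv e (fun R => if R m = t then g R else 0)
      (fun R => if R m = s then g R else 0) fun R => ?_).symm
    have hm : (e R) m = R m + (s - t) := by simp [e]
    have hcond : ((e R) m = s) ↔ (R m = t) := by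
      rw [hm]
      constructor
      · intro h
        have := eq_sub_of_add_eq h
        rwa [sub_sub_cancel] at this
      · intro h; rw [h]; abel
    have hg : g (e R) = g R := hinv R (s - t)
    beta_reduce
    by_cases hR : R m = t
    · rw [if_pos hR, if_pos (hcond.mpr hR), hg]
    · rw [if_neg hR, if_neg (fun h => hR (hcond.mp h))]
  calc (Fintype.card Y : ℝ) * ∑ R : X → Y, (if R m = t then g R else 0)
      = ∑ s : Y, ∑ R : X → Y, (if R m = s then g R else 0) := by
        rw [Finset.sum_congr rfl (fun s _ => hs s), Finset.sum_const, Finset.card_univ,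
          nsmul_eq_mul]
    _ = ∑ R : X → Y, ∑ s : Y, (if R m = s then g R else 0) := Finset.sum_comm
    _ = ∑ R : X → Y, g R := by
        refine Finset.sum_congr rfl fun R _ => ?_
        simp

/-- The key per-`χ` bound: if the state depends on `R` only through its values outside
the blinded set, then the expected forgery probability over `R` is at most `1/|Y|`. -/
private lemma per_chi {X Y ι : Type*} [Fintype X] [DecidableEq X] [Fintype Y]
    [DecidableEq Y] [AddCommGroup Y] [Fintype ι]
    (χ : X → Bool) (out : ι → X × Y) (ψf : (X → Y) → EuclideanSpace ℂ ι)
    (hinv : ∀ R R' : X → Y, (∀ x, χ x = false → R x = R' x) → ψf R = ψf R')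
    (hnorm : ∀ R, (∑ w, ‖ψf R w‖ ^ 2) ≤ 1) :
    (∑ R : X → Y, ∑ w : ι,
        (if χ (out w).1 = true ∧ R (out w).1 = (out w).2 then ‖ψf R w‖ ^ 2 else 0))
      ≤ (Fintype.card (X → Y) : ℝ) / (Fintype.card Y : ℝ) := by
  have hY : (0 : ℝ) < (Fintype.card Y : ℝ) := by
    exact_mod_cast Fintype.card_pos
  rw [Finset.sum_comm]
  have hbound : ∀ w : ι,
      (∑ R : X → Y,
        (if χ (out w).1 = true ∧ R (out w).1 = (out w).2 then ‖ψf R w‖ ^ 2 else 0))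
      ≤ (∑ R : X → Y, ‖ψf R w‖ ^ 2) / (Fintype.card Y : ℝ) := by
    intro w
    by_cases hm : χ (out w).1 = true
    · have hinv' : ∀ (R : X → Y) (s : Y),
          ‖ψf (fun x => if x = (out w).1 then R x + s else R x) w‖ ^ 2 = ‖ψf R w‖ ^ 2 := by
        intro R s
        have : ψf (fun x => if x = (out w).1 then R x + s else R x) = ψf R := by
          apply hinv
          intro x hx
          have hxm : x ≠ (out w).1 := by
            intro h; rw [h, hm] at hx; exact Bool.true_eq_false.mp hx
          simp [hxm]
        rw [this]
      have hslice := slice_bound (fun R => ‖ψf R w‖ ^ 2) (out w).1 (out w).2 hinv'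
      have heq : (∑ R : X → Y,
          (if χ (out w).1 = true ∧ R (out w).1 = (out w).2 then ‖ψf R w‖ ^ 2 else 0))
          = ∑ R : X → Y, (if R (out w).1 = (out w).2 then ‖ψf R w‖ ^ 2 else 0) := by
        refine Finset.sum_congr rfl fun R _ => ?_
        simp [hm]
      rw [heq, le_div_iff₀ hY, mul_comm]
      exact hslice.le
    · have heq : (∑ R : X → Y,
          (if χ (out w).1 = true ∧ R (out w).1 = (out w).2 then ‖ψf R w‖ ^ 2 else 0))
          = 0 := by
        refine Finset.sum_eq_zero fun R _ => ?_
        simp [hm]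
      rw [heq]
      positivity
  calc (∑ w : ι, ∑ R : X → Y,
        (if χ (out w).1 = true ∧ R (out w).1 = (out w).2 then ‖ψf R w‖ ^ 2 else 0))
      ≤ ∑ w : ι, (∑ R : X → Y, ‖ψf R w‖ ^ 2) / (Fintype.card Y : ℝ) :=
        Finset.sum_le_sum fun w _ => hbound w
    _ = (∑ R : X → Y, ∑ w : ι, ‖ψf R w‖ ^ 2) / (Fintype.card Y : ℝ) := by
        rw [← Finset.sum_div, Finset.sum_comm]
    _ ≤ (∑ _R : X → Y, (1 : ℝ)) / (Fintype.card Y : ℝ) := by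
        exact div_le_div_of_nonneg_right (Finset.sum_le_sum fun R _ => hnorm R) hY.le
    _ = (Fintype.card (X → Y) : ℝ) / (Fintype.card Y : ℝ) := by
        rw [Finset.sum_const, Finset.card_univ, nsmul_eq_mul, mul_one]

/-- A uniformly random function is a blind-unforgeable MAC: with `R : X → Y` uniformly
random and `B` an independent `ε`-random subset of `X`, no `T`-query algorithm with oracle
access to the blinded function `B R` (which outputs the blinding symbol `⊥ = (0,1)` on `B`
and `(R x, 0)` elsewhere) produces, upon computational-basis measurement and readout `out`,
a pair `(m, t)` with `m ∈ B` and `R m = t` with probability exceeding `1/|Y|`. -/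
theorem random_function_BU_secure
    {X Y Z : Type*} [Fintype X] [DecidableEq X] [Nonempty X]
    [Fintype Z] [DecidableEq Z] [Nonempty Z]
    [Fintype Y] [DecidableEq Y] [AddCommGroup Y]
    (T : ℕ)
    (ψ₀ : EuclideanSpace ℂ (X × (Y × ZMod 2) × Z)) (hψ₀ : ‖ψ₀‖ = 1)
    (C : Fin (T + 1) →
      (EuclideanSpace ℂ (X × (Y × ZMod 2) × Z) →L[ℂ]
        EuclideanSpace ℂ (X × (Y × ZMod 2) × Z)))
    (hC : ∀ i, C i ∈
      unitary (EuclideanSpace ℂ (X × (Y × ZMod 2) × Z) →L[ℂ]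
        EuclideanSpace ℂ (X × (Y × ZMod 2) × Z)))
    (ε : ℝ) (hε0 : 0 ≤ ε) (hε1 : ε ≤ 1)
    (out : X × (Y × ZMod 2) × Z → X × Y) :
    (∑ R : X → Y, ∑ χ : X → Bool,
        (∏ x : X, (if χ x then ε else 1 - ε)) *
          ∑ w : X × (Y × ZMod 2) × Z,
            (if χ (out w).1 = true ∧ R (out w).1 = (out w).2
             then ‖(⟪EuclideanSpace.single w 1,
                runQ T C
                  (oracleOp fun x => if χ x then ((0 : Y), (1 : ZMod 2)) else (R x, 0)) ψ₀⟫_ℂ)‖ ^ 2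
             else 0))
      / (Fintype.card (X → Y) : ℝ)
      ≤ 1 / (Fintype.card Y : ℝ) := by
  classical
  have hY : (0 : ℝ) < (Fintype.card Y : ℝ) := by exact_mod_cast Fintype.card_pos
  have hF : (0 : ℝ) < (Fintype.card (X → Y) : ℝ) := by exact_mod_cast Fintype.card_pos
  have hnorm : ∀ (χ : X → Bool) (R : X → Y),
      (∑ w : X × (Y × ZMod 2) × Z,
        ‖(runQ T C (oracleOp fun x => if χ x then ((0 : Y), (1 : ZMod 2)) else (R x, 0)) ψ₀) w‖ ^ 2)
        ≤ 1 := by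
    intro χ R
    have h1 : ‖runQ T C (oracleOp fun x => if χ x then ((0 : Y), (1 : ZMod 2)) else (R x, 0)) ψ₀‖
        = 1 := by
      rw [runQ_norm T C hC _ (oracleOp_norm _) ψ₀, hψ₀]
    have h2 : ‖runQ T C (oracleOp fun x => if χ x then ((0 : Y), (1 : ZMod 2)) else (R x, 0)) ψ₀‖ ^ 2
        = ∑ w : X × (Y × ZMod 2) × Z,
          ‖(runQ T C (oracleOp fun x => if χ x then ((0 : Y), (1 : ZMod 2)) else (R x, 0)) ψ₀) w‖ ^ 2 := by
      rw [EuclideanSpace.norm_eq]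
      exact Real.sq_sqrt (by positivity)
    rw [← h2, h1]
    norm_num
  have hp : ∀ χ : X → Bool, (0 : ℝ) ≤ ∏ x : X, (if χ x then ε else 1 - ε) := by
    intro χ
    refine Finset.prod_nonneg fun x _ => ?_
    by_cases hx : χ x = true
    · rw [if_pos hx]; exact hε0
    · rw [if_neg hx]; linarith
  have psum : (∑ χ : X → Bool, ∏ x : X, (if χ x then ε else 1 - ε)) = 1 := by
    have h := Finset.prod_univ_sum (fun _ : X => (Finset.univ : Finset Bool))
      (fun (_ : X) (b : Bool) => if b then ε else 1 - ε)
    rw [Fintype.piFinset_univ] at h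
    calc (∑ χ : X → Bool, ∏ x : X, (if χ x then ε else 1 - ε))
        = ∏ x : X, ∑ b : Bool, (if b then ε else 1 - ε) := h.symm
      _ = ∏ _x : X, (1 : ℝ) := Finset.prod_congr rfl fun x _ => by
          rw [Fintype.sum_bool]; norm_num
      _ = 1 := Finset.prod_const_one
  have key : ∀ χ : X → Bool,
      (∑ R : X → Y, ∑ w : X × (Y × ZMod 2) × Z,
        (if χ (out w).1 = true ∧ R (out w).1 = (out w).2
         then ‖(runQ T C (oracleOp fun x => if χ x then ((0 : Y), (1 : ZMod 2)) else (R x, 0)) ψ₀) w‖ ^ 2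
         else 0))
      ≤ (Fintype.card (X → Y) : ℝ) / (Fintype.card Y : ℝ) := by
    intro χ
    refine per_chi χ out
      (fun R => runQ T C (oracleOp fun x => if χ x then ((0 : Y), (1 : ZMod 2)) else (R x, 0)) ψ₀)
      ?_ (hnorm χ)
    intro R R' h
    have horacle : (fun x => if χ x then ((0 : Y), (1 : ZMod 2)) else (R x, 0))
        = fun x => if χ x then ((0 : Y), (1 : ZMod 2)) else (R' x, 0) := by
      funext x
      by_cases hx : χ x
      · simp [hx]
      · simp [hx, h x (Bool.not_eq_true _ ▸ hx)]
    beta_reduce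
    rw [horacle]
  rw [div_le_iff₀ hF]
  simp only [EuclideanSpace.inner_single_left, map_one, one_mul]
  calc (∑ R : X → Y, ∑ χ : X → Bool,
        (∏ x : X, (if χ x then ε else 1 - ε)) *
          ∑ w : X × (Y × ZMod 2) × Z,
            (if χ (out w).1 = true ∧ R (out w).1 = (out w).2
             then ‖(runQ T C (oracleOp fun x => if χ x then ((0 : Y), (1 : ZMod 2)) else (R x, 0)) ψ₀) w‖ ^ 2
             else 0))
      = ∑ χ : X → Bool,
          (∏ x : X, (if χ x then ε else 1 - ε)) *
            ∑ R : X → Y, ∑ w : X × (Y × ZMod 2) × Z,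
              (if χ (out w).1 = true ∧ R (out w).1 = (out w).2
               then ‖(runQ T C (oracleOp fun x => if χ x then ((0 : Y), (1 : ZMod 2)) else (R x, 0)) ψ₀) w‖ ^ 2
               else 0) := by
        rw [Finset.sum_comm]
        exact Finset.sum_congr rfl fun χ _ => (Finset.mul_sum _ _ _).symm
    _ ≤ ∑ χ : X → Bool,
          (∏ x : X, (if χ x then ε else 1 - ε)) *
            ((Fintype.card (X → Y) : ℝ) / (Fintype.card Y : ℝ)) :=
        Finset.sum_le_sum fun χ _ => mul_le_mul_of_nonneg_left (key χ) (hp χ)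
    _ = (∑ χ : X → Bool, ∏ x : X, (if χ x then ε else 1 - ε)) *
          ((Fintype.card (X → Y) : ℝ) / (Fintype.card Y : ℝ)) := (Finset.sum_mul _ _ _).symm
    _ = (Fintype.card (X → Y) : ℝ) / (Fintype.card Y : ℝ) := by rw [psum, one_mul]
    _ = 1 / (Fintype.card Y : ℝ) * (Fintype.card (X → Y) : ℝ) := by ring

end
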